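/- Let k ≥ 2 be an integer and γ(k) = log 2 + Σ_{i=0}^∞ log(1 + 1/t'_k(i)^k)/k^(i+1) with t'_k(0) = 2, t'_k(i+1) = t'_k(i)^k + 1. Then log 2 + log(1 + 2^(−k))/k < γ(k) < log 2 + log(1 + 2^(−k))/k + 1/(2^(k²) k (k−1)). -/

import Mathlib

theorem stmt5 (k : ℕ) (hk : 2 ≤ k) (t' : ℕ → ℕ)
    (h0 : t' 0 = 2) (hrec : ∀ i, t' (i + 1) = t' i ^ k + 1) :
    Real.log 2 + Real.log (1 + (2 : ℝ) ^ (-(k : ℝ))) / (k : ℝ) <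
      Real.log 2 + ∑' i : ℕ, Real.log (1 + 1 / (t' i : ℝ) ^ k) / (k : ℝ) ^ (i + 1) ∧
    Real.log 2 + ∑' i : ℕ, Real.log (1 + 1 / (t' i : ℝ) ^ k) / (k : ℝ) ^ (i + 1) <
      Real.log 2 + Real.log (1 + (2 : ℝ) ^ (-(k : ℝ))) / (k : ℝ) +
        1 / ((2 : ℝ) ^ (k ^ 2) * (k : ℝ) * ((k : ℝ) - 1)) := by
  have hk1 : (1:ℝ) < (k:ℝ) := by exact_mod_cast lt_of_lt_of_le one_lt_two hk
  have hk0 : (0:ℝ) < (k:ℝ) := lt_trans one_pos hk1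
  set a : ℕ → ℝ := fun i => Real.log (1 + 1 / (t' i : ℝ) ^ k) / (k : ℝ) ^ (i + 1) with ha
  have ht2 : ∀ i, 2 ≤ t' i := by
    intro i
    induction i with
    | zero => omega
    | succ n ih =>
      have h1 : 1 ≤ t' n ^ k := Nat.one_le_pow _ _ (by omega)
      rw [hrec]; omega
  have htpos : ∀ i, (0:ℝ) < (t' i : ℝ) ^ k := by
    intro i
    have : (0:ℝ) < (t' i : ℝ) := by exact_mod_cast lt_of_lt_of_le two_pos (ht2 i)
    positivity
  have ht1 : ∀ i, (2:ℝ) ^ (k^2) ≤ (t' (i+1) : ℝ) ^ k := by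
    intro i
    have h2k : (2:ℕ)^k ≤ t' (i+1) := by
      rw [hrec]
      have := Nat.pow_le_pow_left (ht2 i) k
      omega
    have h2kR : (2:ℝ)^k ≤ (t' (i+1) : ℝ) := by exact_mod_cast h2k
    calc (2:ℝ) ^ (k^2) = ((2:ℝ)^k)^k := by rw [← pow_mul, sq]
    _ ≤ (t' (i+1) : ℝ) ^ k := by
        apply pow_le_pow_left₀ (by positivity) h2kR
  have ha_nonneg : ∀ i, 0 ≤ a i := by
    intro i
    apply div_nonneg _ (by positivity)
    apply Real.log_nonneg
    have := htpos i
    have : 0 ≤ 1 / (t' i : ℝ) ^ k := by positivity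
    linarith
  have hr1 : (1:ℝ)/(k:ℝ) < 1 := by
    rw [div_lt_one hk0]; exact hk1
  have hr0 : (0:ℝ) ≤ 1/(k:ℝ) := by positivity
  have hgeo : Summable (fun i : ℕ => ((1:ℝ)/(k:ℝ))^i) :=
    summable_geometric_of_lt_one hr0 hr1
  have hsum : Summable a := by
    apply Summable.of_nonneg_of_le ha_nonneg _ hgeo
    intro i
    have hlog : Real.log (1 + 1 / (t' i : ℝ) ^ k) ≤ 1 := by
      have h1 : 1 / (t' i : ℝ) ^ k ≤ 1 := by
        rw [div_le_one (htpos i)]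
        have : (2:ℝ) ≤ (t' i : ℝ) := by exact_mod_cast ht2 i
        have h2 : (1:ℝ) ≤ (t' i : ℝ) ^ k := one_le_pow₀ (by linarith)
        linarith
      calc Real.log (1 + 1 / (t' i : ℝ) ^ k) ≤ Real.log 2 := by
            apply Real.log_le_log (by positivity)
            linarith
      _ ≤ 1 := by
            have := Real.log_two_lt_d9
            linarith
    calc a i ≤ 1 / (k:ℝ)^(i+1) := by
          apply div_le_div_of_nonneg_right ?_ (by positivity) |>.trans_eq rfl
          · exact hlog
    _ ≤ ((1:ℝ)/(k:ℝ))^i := by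
          rw [div_pow, one_pow]
          apply div_le_div_of_nonneg_left one_pos.le (by positivity)
          calc (k:ℝ)^i ≤ (k:ℝ)^(i+1) := by
                apply pow_le_pow_right₀ (by linarith) (by omega)
          _ ≤ (k:ℝ)^(i+1) := le_refl _
  have hsplit : ∑' i, a i = a 0 + ∑' i, a (i+1) := Summable.tsum_eq_zero_add hsum
  have ha0 : a 0 = Real.log (1 + (2 : ℝ) ^ (-(k : ℝ))) / (k : ℝ) := by
    have : (2:ℝ) ^ (-(k:ℝ)) = 1 / (2:ℝ)^k := by
      rw [Real.rpow_neg (by norm_num), Real.rpow_natCast, one_div]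
    rw [ha]; simp only [h0, this, pow_one]; norm_num
  have htail_sum : Summable (fun i => a (i+1)) := (summable_nat_add_iff 1).2 hsum
  have htail_pos : 0 < ∑' i, a (i+1) := by
    apply Summable.tsum_pos htail_sum (fun i => ha_nonneg _) 0
    apply div_pos _ (by positivity)
    apply Real.log_pos
    have := htpos 1
    have : 0 < 1 / (t' 1 : ℝ) ^ k := by positivity
    linarith
  constructor
  · rw [hsplit, ha0]; linarith
  · rw [hsplit, ha0]
    have key : ∑' i, a (i+1) < 1 / ((2 : ℝ) ^ (k ^ 2) * (k : ℝ) * ((k : ℝ) - 1)) := by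
      set g : ℕ → ℝ := fun i => (1 / ((2:ℝ)^(k^2) * (k:ℝ)^2)) * ((1:ℝ)/(k:ℝ))^i with hg
      have hg_sum : Summable g := hgeo.mul_left _
      have hlt : ∀ i, a (i+1) < g i := by
        intro i
        have hT := ht1 i
        have hTpos := htpos (i+1)
        have hnum : Real.log (1 + 1 / (t' (i+1) : ℝ) ^ k) < 1 / (2:ℝ)^(k^2) := by
          have h1 : Real.log (1 + 1 / (t' (i+1) : ℝ) ^ k) < 1 / (t' (i+1) : ℝ) ^ k := by
            have hx : (0:ℝ) < 1 + 1 / (t' (i+1) : ℝ) ^ k := by positivity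
            have hne : 1 + 1 / (t' (i+1) : ℝ) ^ k ≠ 1 := by
              have : 0 < 1 / (t' (i+1) : ℝ) ^ k := by positivity
              linarith
            have := Real.log_lt_sub_one_of_pos hx hne
            linarith
          have h2 : 1 / (t' (i+1) : ℝ) ^ k ≤ 1 / (2:ℝ)^(k^2) := by
            apply one_div_le_one_div_of_le (by positivity) hT
          linarith
        have hgi : g i = (1 / (2:ℝ)^(k^2)) / (k:ℝ)^(i+1+1) := by
          rw [hg]
          simp only
          rw [div_pow, one_pow]
          field_simp
          ring
        rw [hgi, ha]
        simp only
        gcongr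
      have hval : ∑' i, g i = 1 / ((2 : ℝ) ^ (k ^ 2) * (k : ℝ) * ((k : ℝ) - 1)) := by
        rw [hg]
        rw [tsum_mul_left, tsum_geometric_of_lt_one hr0 hr1]
        have hm : (0:ℝ) < (k:ℝ) - 1 := by linarith
        have hd1 : (0:ℝ) < (2:ℝ)^(k^2) * (k:ℝ)^2 * ((k:ℝ) - 1) :=
          mul_pos (by positivity) hm
        have hd2 : (0:ℝ) < (2:ℝ)^(k^2) * (k:ℝ) * ((k:ℝ) - 1) :=
          mul_pos (by positivity) hm
        field_simp
      calc ∑' i, a (i+1) < ∑' i, g i :=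
            Summable.tsum_lt_tsum (fun i => (hlt i).le) (hlt 0) htail_sum hg_sum
      _ = _ := hval
    linarith
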